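/- Let X be a metric space, I : X → [0,∞] a good rate function, F : X → Y continuous, and J(y) = inf { I(x) : F(x) = y }. Then for every α ≥ 0, the level set {y ∈ Y : J(y) ≤ α} equals the image F({x ∈ X : I(x) ≤ α}). In particular, if J(y) < ∞ then the infimum defining J(y) is attained. -/

import Mathlib

open scoped ENNReal NNReal

lemma attained_aux {X Y : Type*}
    [MetricSpace X] [MetricSpace Y]
    (I : X → ℝ≥0∞) (hIlsc : LowerSemicontinuous I)
    (hIcomp : ∀ α : ℝ≥0, IsCompact {x : X | I x ≤ (α : ℝ≥0∞)})
    (F : X → Y) (hF : Continuous F) (y : Y)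
    (hfin : (⨅ x ∈ {x : X | F x = y}, I x) < ∞) :
    ∃ x : X, F x = y ∧ I x = ⨅ x ∈ {x : X | F x = y}, I x := by
  set m : ℝ≥0∞ := ⨅ x ∈ {x : X | F x = y}, I x with hm
  set t : ℕ → Set X := fun n =>
    {x : X | F x = y} ∩ I ⁻¹' Set.Iic (m + 1 / (n + 1)) with ht
  have htd : ∀ n, t (n + 1) ⊆ t n := by
    intro n x hx
    refine ⟨hx.1, le_trans hx.2 (add_le_add_right ?_ m)⟩
    apply ENNReal.div_le_div_left
    push_cast
    exact add_le_add_left (by exact_mod_cast Nat.le_succ n) 1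
  have htn : ∀ n, (t n).Nonempty := by
    intro n
    have hlt : m < m + 1 / (n + 1) := by
      apply ENNReal.lt_add_right hfin.ne
      simp [ENNReal.div_eq_top]
    rw [hm, iInf_lt_iff] at hlt
    obtain ⟨x, hx⟩ := hlt
    rw [iInf_lt_iff] at hx
    obtain ⟨hxy, hxlt⟩ := hx
    exact ⟨x, hxy, le_of_lt hxlt⟩
  have htcl : ∀ n, IsClosed (t n) := fun n =>
    (isClosed_singleton.preimage hF).inter (hIlsc.isClosed_preimage _)
  have ht0 : IsCompact (t 0) := by
    have hmc : m + 1 ≠ ∞ := by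
      simp [ENNReal.add_ne_top, hfin.ne]
    have : t 0 ⊆ {x : X | I x ≤ ((m + 1).toNNReal : ℝ≥0∞)} := by
      intro x hx
      rw [ENNReal.coe_toNNReal hmc]
      simpa using hx.2
    exact (hIcomp _).of_isClosed_subset (htcl 0) this
  obtain ⟨x, hx⟩ := IsCompact.nonempty_iInter_of_sequence_nonempty_isCompact_isClosed
    t htd htn ht0 htcl
  simp only [Set.mem_iInter, ht, Set.mem_inter_iff, Set.mem_preimage, Set.mem_Iic,
    Set.mem_setOf_eq] at hx
  have hxy : F x = y := (hx 0).1
  refine ⟨x, hxy, le_antisymm ?_ ?_⟩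
  · have : I x ≤ m := by
      refine ENNReal.le_of_forall_pos_le_add fun ε hε hmt => ?_
      have hεne : (ε : ℝ≥0∞) ≠ 0 := by exact_mod_cast hε.ne'
      obtain ⟨n, hn⟩ := ENNReal.exists_inv_nat_lt hεne
      refine le_trans (hx n).2 (add_le_add_right ?_ m)
      rw [one_div]
      refine le_of_lt (lt_of_le_of_lt ?_ hn)
      gcongr
      exact le_self_add
    exact this
  · exact iInf₂_le x hxy

/-- For a good rate function `I` on `X`, a continuous `F : X → Y` and
`J y = inf {I x : F x = y}`, each level set of `J` is the image under `F`
of the corresponding level set of `I`; in particular the infimum defining a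
finite value `J y` is attained. -/
theorem level_sets_of_contracted_rate_function {X Y : Type*}
    [MetricSpace X] [MetricSpace Y]
    (I : X → ℝ≥0∞) (hIlsc : LowerSemicontinuous I)
    (hIcomp : ∀ α : ℝ≥0, IsCompact {x : X | I x ≤ (α : ℝ≥0∞)})
    (F : X → Y) (hF : Continuous F) :
    (∀ α : ℝ≥0, {y : Y | (⨅ x ∈ {x : X | F x = y}, I x) ≤ (α : ℝ≥0∞)}
        = F '' {x : X | I x ≤ (α : ℝ≥0∞)}) ∧
      ∀ y : Y, (⨅ x ∈ {x : X | F x = y}, I x) < ∞ →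
        ∃ x : X, F x = y ∧ I x = ⨅ x ∈ {x : X | F x = y}, I x := by
  refine ⟨fun α => ?_, attained_aux I hIlsc hIcomp F hF⟩
  ext y
  constructor
  · intro hy
    obtain ⟨x, hxy, hxI⟩ := attained_aux I hIlsc hIcomp F hF y
      (lt_of_le_of_lt hy (ENNReal.coe_lt_top))
    refine ⟨x, ?_, hxy⟩
    rw [Set.mem_setOf_eq, hxI]
    exact hy
  · rintro ⟨x, hxI, rfl⟩
    simp only [Set.mem_setOf_eq]
    refine le_trans ?_ hxI
    exact iInf_le_of_le x (iInf_le_of_le rfl le_rfl)
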